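/- Let {pᵢ}, {eᵢ} be a pair of dual frames for a Hilbert space H and {qⱼ}, {hⱼ} a pair of dual frames for a Hilbert space K. Then {eᵢ ⊗ hⱼ}ᵢ,ⱼ is a dual frame of {pᵢ ⊗ qⱼ}ᵢ,ⱼ for the Hilbert space tensor product H ⊗ K; that is, u = Σᵢ,ⱼ ⟨u, eᵢ ⊗ hⱼ⟩ (pᵢ ⊗ qⱼ) for all u ∈ H ⊗ K. -/

import Mathlib

open scoped RealInnerProductSpace

/-- `IsHilbertTensorProduct tmul` says that the continuous bilinear map
`tmul : H →L K →L E` realizes `E` as the Hilbert space tensor product `H ⊗ K`: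
`⟨p ⊗ q, p' ⊗ q'⟩ = ⟨p, p'⟩⟨q, q'⟩` and the elementary tensors span a dense
subspace of `E`. -/
def IsHilbertTensorProduct {H K E : Type*}
    [NormedAddCommGroup H] [InnerProductSpace ℝ H]
    [NormedAddCommGroup K] [InnerProductSpace ℝ K]
    [NormedAddCommGroup E] [InnerProductSpace ℝ E]
    (tmul : H →L[ℝ] K →L[ℝ] E) : Prop :=
  (∀ (p p' : H) (q q' : K), ⟪tmul p q, tmul p' q'⟫ = ⟪p, p'⟫ * ⟪q, q'⟫) ∧
  Dense ((Submodule.span ℝ (Set.range fun z : H × K => tmul z.1 z.2) : Submodule ℝ E) : Set E)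

/-- `IsFrameWith A B f`: the family `f` is a frame with frame bounds `A ≤ B`,
i.e. `A‖x‖² ≤ Σᵢ |⟨x, fᵢ⟩|² ≤ B‖x‖²` for all `x`. -/
def IsFrameWith {ι X : Type*} [NormedAddCommGroup X] [InnerProductSpace ℝ X]
    (A B : ℝ) (f : ι → X) : Prop :=
  0 < A ∧ A ≤ B ∧
    ∀ x : X, A * ‖x‖ ^ 2 ≤ (∑' i : ι, ⟪x, f i⟫ ^ 2) ∧
      (∑' i : ι, ⟪x, f i⟫ ^ 2) ≤ B * ‖x‖ ^ 2

set_option linter.unusedSectionVars false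
set_option linter.unusedVariables false
set_option maxHeartbeats 1000000

section FrameHelpers

variable {H K E : Type*}
  [NormedAddCommGroup H] [InnerProductSpace ℝ H] [CompleteSpace H]
  [NormedAddCommGroup K] [InnerProductSpace ℝ K] [CompleteSpace K]
  [NormedAddCommGroup E] [InnerProductSpace ℝ E] [CompleteSpace E]

def FP {ι X : Type*} [NormedAddCommGroup X] [InnerProductSpace ℝ X] (A B : ℝ) (f : ι → X) : Prop :=
  ∀ x : X, Summable (fun i => ⟪x, f i⟫ ^ 2) ∧
    A * ‖x‖ ^ 2 ≤ (∑' i, ⟪x, f i⟫ ^ 2) ∧ (∑' i, ⟪x, f i⟫ ^ 2) ≤ B * ‖x‖ ^ 2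

theorem fp_of_frame {ι X : Type*} [NormedAddCommGroup X] [InnerProductSpace ℝ X]
    {A B : ℝ} {f : ι → X}
    (hA : 0 < A)
    (h : ∀ x : X, A * ‖x‖ ^ 2 ≤ (∑' i : ι, ⟪x, f i⟫ ^ 2) ∧
      (∑' i : ι, ⟪x, f i⟫ ^ 2) ≤ B * ‖x‖ ^ 2) : FP A B f := by
  intro x
  by_cases hs : Summable (fun i => ⟪x, f i⟫ ^ 2)
  · exact ⟨hs, (h x).1, (h x).2⟩
  · exfalso
    have h0 : (∑' i, ⟪x, f i⟫ ^ 2) = 0 := tsum_eq_zero_of_not_summable hs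
    have := (h x).1
    rw [h0] at this
    have hx0 : x = 0 := by
      have hsq : ‖x‖ ^ 2 ≤ 0 := by
        by_contra hpos
        push_neg at hpos
        nlinarith
      have : ‖x‖ = 0 := by nlinarith [norm_nonneg x]
      simpa using this
    subst hx0
    apply hs
    have : (fun i => ⟪(0 : X), f i⟫ ^ 2) = fun _ => (0:ℝ) := by
      funext i; simp
    rw [this]
    exact summable_zero

theorem fp_hilbertBasis {ι X : Type*} [NormedAddCommGroup X] [InnerProductSpace ℝ X]
    [CompleteSpace X] (b : HilbertBasis ι ℝ X) : FP 1 1 (fun i => b i) := by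
  intro x
  have hsq : ∀ i, ⟪x, b i⟫ * ⟪b i, x⟫ = ⟪x, b i⟫ ^ 2 := by
    intro i; rw [real_inner_comm (b i) x]; ring
  have hs := b.summable_inner_mul_inner x x
  have ht := b.tsum_inner_mul_inner x x
  simp only [hsq] at hs ht
  rw [real_inner_self_eq_norm_sq] at ht
  exact ⟨hs, by rw [ht]; simp, by rw [ht]; simp⟩

theorem fp_hilbertBasis' {ι X : Type*} [NormedAddCommGroup X] [InnerProductSpace ℝ X]
    [CompleteSpace X] (b : HilbertBasis ι ℝ X) {v : ι → X} (hv : ∀ i, b i = v i) :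
    FP 1 1 v := by
  intro x
  have h := fp_hilbertBasis b x
  simp only [hv] at h
  exact h

noncomputable def Wmap (tmul : H →L[ℝ] K →L[ℝ] E) (u : E) (p : H) : K :=
  (InnerProductSpace.toDual ℝ K).symm ((innerSL ℝ u).comp (tmul p))

theorem Wmap_inner (tmul : H →L[ℝ] K →L[ℝ] E) (u : E) (p : H) (y : K) :
    ⟪Wmap tmul u p, y⟫ = ⟪u, tmul p y⟫ := InnerProductSpace.toDual_symm_apply

theorem wnorm {ιK : Type*} (tmul : H →L[ℝ] K →L[ℝ] E) (u : E) (p : H)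
    (c : HilbertBasis ιK ℝ K) :
    Summable (fun k => ⟪u, tmul p (c k)⟫ ^ 2) ∧
    (∑' k, ⟪u, tmul p (c k)⟫ ^ 2) = ‖Wmap tmul u p‖ ^ 2 := by
  have h := fp_hilbertBasis c (Wmap tmul u p)
  simp only [Wmap_inner] at h
  exact ⟨h.1, le_antisymm (by linarith [h.2.2]) (by linarith [h.2.1])⟩

theorem dsl {ι κ : Type*} (tmul : H →L[ℝ] K →L[ℝ] E) (f : ι → H) (g : κ → K)
    {C D : ℝ} (hg : FP C D g) (u : E)
    (hS : Summable (fun i => ‖Wmap tmul u (f i)‖ ^ 2)) :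
    Summable (fun z : ι × κ => ⟪u, tmul (f z.1) (g z.2)⟫ ^ 2) ∧
    C * (∑' i, ‖Wmap tmul u (f i)‖ ^ 2) ≤ (∑' z : ι × κ, ⟪u, tmul (f z.1) (g z.2)⟫ ^ 2) ∧
    (∑' z : ι × κ, ⟪u, tmul (f z.1) (g z.2)⟫ ^ 2) ≤ D * (∑' i, ‖Wmap tmul u (f i)‖ ^ 2) := by
  have hrw : ∀ (i : ι) (k : κ), ⟪u, tmul (f i) (g k)⟫ ^ 2 = ⟪Wmap tmul u (f i), g k⟫ ^ 2 := by
    intro i k; rw [Wmap_inner]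
  have h1 : ∀ i : ι, Summable (fun k => ⟪u, tmul (f i) (g k)⟫ ^ 2) := by
    intro i; simp only [hrw]; exact (hg (Wmap tmul u (f i))).1
  have h2 : ∀ i : ι, (∑' k, ⟪u, tmul (f i) (g k)⟫ ^ 2) ≤ D * ‖Wmap tmul u (f i)‖ ^ 2 := by
    intro i; simp only [hrw]; exact (hg (Wmap tmul u (f i))).2.2
  have h3 : ∀ i : ι, C * ‖Wmap tmul u (f i)‖ ^ 2 ≤ (∑' k, ⟪u, tmul (f i) (g k)⟫ ^ 2) := by
    intro i; simp only [hrw]; exact (hg (Wmap tmul u (f i))).2.1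
  have hnn : ∀ z : ι × κ, 0 ≤ ⟪u, tmul (f z.1) (g z.2)⟫ ^ 2 := fun z => sq_nonneg _
  have hout : Summable (fun i => ∑' k, ⟪u, tmul (f i) (g k)⟫ ^ 2) :=
    Summable.of_nonneg_of_le (fun i => tsum_nonneg fun k => sq_nonneg _) h2 (hS.mul_left D)
  have hsum : Summable (fun z : ι × κ => ⟪u, tmul (f z.1) (g z.2)⟫ ^ 2) :=
    (summable_prod_of_nonneg hnn).2 ⟨h1, hout⟩
  have heq : (∑' z : ι × κ, ⟪u, tmul (f z.1) (g z.2)⟫ ^ 2)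
      = ∑' i, ∑' k, ⟪u, tmul (f i) (g k)⟫ ^ 2 := hsum.tsum_prod' h1
  refine ⟨hsum, ?_, ?_⟩
  · rw [heq, ← tsum_mul_left]
    exact (hS.mul_left C).tsum_le_tsum h3 hout
  · rw [heq, ← tsum_mul_left]
    exact hout.tsum_le_tsum h2 (hS.mul_left D)

theorem slice2 {ι κ : Type*} (F : ι × κ → ℝ) (h0 : ∀ z, 0 ≤ F z) (hF : Summable F) :
    Summable (fun k : κ => ∑' i : ι, F (i, k)) ∧ (∑' k : κ, ∑' i : ι, F (i, k)) = ∑' z, F z := by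
  have he : Summable (F ∘ (Equiv.prodComm κ ι)) := (Equiv.summable_iff _).2 hF
  have h0' : ∀ z : κ × ι, 0 ≤ (F ∘ (Equiv.prodComm κ ι)) z := fun z => h0 _
  have h := (summable_prod_of_nonneg h0').1 he
  refine ⟨h.2, ?_⟩
  have h1 : ∑' (p : κ × ι), (F ∘ ⇑(Equiv.prodComm κ ι)) p = ∑' z : ι × κ, F z :=
    Equiv.tsum_eq (Equiv.prodComm κ ι) F
  calc ∑' (k : κ) (i : ι), F (i, k)
      = ∑' (b : κ) (c : ι), (F ∘ ⇑(Equiv.prodComm κ ι)) (b, c) := rfl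
    _ = ∑' (p : κ × ι), (F ∘ ⇑(Equiv.prodComm κ ι)) p := (he.tsum_prod' h.1).symm
    _ = ∑' z : ι × κ, F z := h1

theorem tensor_orthonormal {ιH ιK : Type*} (tmul : H →L[ℝ] K →L[ℝ] E)
    (hip : ∀ (p p' : H) (q q' : K), ⟪tmul p q, tmul p' q'⟫ = ⟪p, p'⟫ * ⟪q, q'⟫)
    (b : HilbertBasis ιH ℝ H) (c : HilbertBasis ιK ℝ K) :
    Orthonormal ℝ (fun z : ιH × ιK => tmul (b z.1) (c z.2)) := by
  classical
  rw [orthonormal_iff_ite]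
  have hb := b.orthonormal
  have hc := c.orthonormal
  rw [orthonormal_iff_ite] at hb hc
  intro z z'
  have := hip (b z.1) (b z'.1) (c z.2) (c z'.2)
  rw [this, hb z.1 z'.1, hc z.2 z'.2]
  by_cases h1 : z.1 = z'.1 <;> by_cases h2 : z.2 = z'.2 <;>
    simp [h1, h2, Prod.ext_iff]

theorem tensor_dense_span {ιH ιK : Type*} (tmul : H →L[ℝ] K →L[ℝ] E)
    (hdense : Dense ((Submodule.span ℝ (Set.range fun z : H × K => tmul z.1 z.2) : Submodule ℝ E) : Set E))
    (b : HilbertBasis ιH ℝ H) (c : HilbertBasis ιK ℝ K) :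
    ⊤ ≤ (Submodule.span ℝ (Set.range fun z : ιH × ιK => tmul (b z.1) (c z.2))).topologicalClosure := by
  set M := (Submodule.span ℝ (Set.range fun z : ιH × ιK => tmul (b z.1) (c z.2))).topologicalClosure with hM
  have hMclosed : IsClosed (M : Set E) := Submodule.isClosed_topologicalClosure _
  have step1 : ∀ (a : ιH) (y : K), tmul (b a) y ∈ M := by
    intro a y
    set N : Submodule ℝ K := M.comap (tmul (b a) : K →ₗ[ℝ] E) with hN
    have hNclosed : IsClosed (N : Set K) := hMclosed.preimage (tmul (b a)).continuous
    have hle : Submodule.span ℝ (Set.range fun k : ιK => c k) ≤ N := by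
      rw [Submodule.span_le]
      rintro _ ⟨k, rfl⟩
      show tmul (b a) (c k) ∈ M
      exact Submodule.le_topologicalClosure _
        (Submodule.subset_span ⟨(a, k), rfl⟩)
    have := (Submodule.span ℝ (Set.range fun k : ιK => c k)).topologicalClosure_minimal hle hNclosed
    have htop : ⊤ ≤ (Submodule.span ℝ (Set.range fun k : ιK => c k)).topologicalClosure :=
      le_of_eq c.dense_span.symm
    exact (htop.trans this) (Submodule.mem_top (x := y))
  have step2 : ∀ (x : H) (y : K), tmul x y ∈ M := by
    intro x y
    set N : Submodule ℝ H := M.comap ((tmul.flip y) : H →ₗ[ℝ] E) with hN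
    have hNclosed : IsClosed (N : Set H) := hMclosed.preimage (tmul.flip y).continuous
    have hle : Submodule.span ℝ (Set.range fun a : ιH => b a) ≤ N := by
      rw [Submodule.span_le]
      rintro _ ⟨a, rfl⟩
      show tmul.flip y (b a) ∈ M
      simpa using step1 a y
    have := (Submodule.span ℝ (Set.range fun a : ιH => b a)).topologicalClosure_minimal hle hNclosed
    have htop : ⊤ ≤ (Submodule.span ℝ (Set.range fun a : ιH => b a)).topologicalClosure :=
      le_of_eq b.dense_span.symm
    have hx : x ∈ N := (htop.trans this) (Submodule.mem_top (x := x))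
    exact hx
  have hspan : (Submodule.span ℝ (Set.range fun z : H × K => tmul z.1 z.2) : Submodule ℝ E) ≤ M := by
    rw [Submodule.span_le]
    rintro _ ⟨z, rfl⟩
    exact step2 z.1 z.2
  intro x _
  have hmem : x ∈ closure ((Submodule.span ℝ (Set.range fun z : H × K => tmul z.1 z.2) : Submodule ℝ E) : Set E) := by
    rw [hdense.closure_eq]; trivial
  exact closure_minimal hspan hMclosed hmem

theorem fp_tensor {ι κ : Type*} (tmul : H →L[ℝ] K →L[ℝ] E)
    (hip : ∀ (p p' : H) (q q' : K), ⟪tmul p q, tmul p' q'⟫ = ⟪p, p'⟫ * ⟪q, q'⟫)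
    (hdense : Dense ((Submodule.span ℝ (Set.range fun z : H × K => tmul z.1 z.2) : Submodule ℝ E) : Set E))
    {A B C D : ℝ} (hC : 0 ≤ C) (hD : 0 ≤ D)
    {f : ι → H} {g : κ → K} (hf : FP A B f) (hg : FP C D g) :
    FP (A * C) (B * D) (fun z : ι × κ => tmul (f z.1) (g z.2)) := by
  obtain ⟨wH, b, hb⟩ := exists_hilbertBasis ℝ H
  obtain ⟨wK, c, hc⟩ := exists_hilbertBasis ℝ K
  have hone := tensor_orthonormal tmul hip b c
  have hsp := tensor_dense_span tmul hdense b c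
  have hd : FP 1 1 (fun z : ↥wH × ↥wK => tmul (b z.1) (c z.2)) :=
    fp_hilbertBasis' (HilbertBasis.mk hone hsp)
      (fun z => congrFun (HilbertBasis.coe_mk hone hsp) z)
  intro u
  set F : ↥wH × ↥wK → ℝ := fun z => ⟪u, tmul (b z.1) (c z.2)⟫ ^ 2 with hFdef
  have hFnn : ∀ z, 0 ≤ F z := fun z => sq_nonneg _
  have hFs : Summable F := (hd u).1
  have hFt : (∑' z, F z) = ‖u‖ ^ 2 :=
    le_antisymm (by linarith [(hd u).2.2]) (by linarith [(hd u).2.1])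
  have hsl := slice2 F hFnn hFs
  have hWk : ∀ k, (∑' a, F (a, k)) = ‖Wmap tmul.flip u (c k)‖ ^ 2 := by
    intro k
    have h := (wnorm tmul.flip u (c k) b).2
    simpa [hFdef, ContinuousLinearMap.flip_apply] using h
  have hS' : Summable (fun k => ‖Wmap tmul.flip u (c k)‖ ^ 2) := by
    have := hsl.1
    simpa only [hWk] using this
  have hT' : (∑' k, ‖Wmap tmul.flip u (c k)‖ ^ 2) = ‖u‖ ^ 2 := by
    rw [← tsum_congr hWk, hsl.2, hFt]
  have hB := dsl tmul.flip (fun k => c k) f hf u hS'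
  rw [hT'] at hB
  set G : ↥wK × ι → ℝ := fun z => ⟪u, tmul (f z.2) (c z.1)⟫ ^ 2 with hGdef
  have hGeq : (fun z : ↥wK × ι => ⟪u, tmul.flip ((fun k => c k) z.1) (f z.2)⟫ ^ 2) = G := by
    funext z; simp [hGdef, ContinuousLinearMap.flip_apply]
  rw [hGeq] at hB
  have hsl2 := slice2 G (fun z => sq_nonneg _) hB.1
  have hWi : ∀ i, (∑' k, G (k, i)) = ‖Wmap tmul u (f i)‖ ^ 2 := by
    intro i
    have h := (wnorm tmul u (f i) c).2
    simpa [hGdef] using h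
  have hS : Summable (fun i => ‖Wmap tmul u (f i)‖ ^ 2) := by
    have := hsl2.1
    simpa only [hWi] using this
  have hT1 : A * ‖u‖ ^ 2 ≤ (∑' i, ‖Wmap tmul u (f i)‖ ^ 2) := by
    rw [← tsum_congr hWi, hsl2.2]; exact hB.2.1
  have hT2 : (∑' i, ‖Wmap tmul u (f i)‖ ^ 2) ≤ B * ‖u‖ ^ 2 := by
    rw [← tsum_congr hWi, hsl2.2]; exact hB.2.2
  have hD2 := dsl tmul f g hg u hS
  refine ⟨hD2.1, ?_, ?_⟩
  · calc A * C * ‖u‖ ^ 2 = C * (A * ‖u‖ ^ 2) := by ring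
      _ ≤ C * (∑' i, ‖Wmap tmul u (f i)‖ ^ 2) := mul_le_mul_of_nonneg_left hT1 hC
      _ ≤ _ := hD2.2.1
  · calc (∑' z : ι × κ, ⟪u, tmul (f z.1) (g z.2)⟫ ^ 2)
        ≤ D * (∑' i, ‖Wmap tmul u (f i)‖ ^ 2) := hD2.2.2
      _ ≤ D * (B * ‖u‖ ^ 2) := mul_le_mul_of_nonneg_left hT2 hD
      _ = B * D * ‖u‖ ^ 2 := by ring

end FrameHelpers

section Synthesis

variable {H K E : Type*}
  [NormedAddCommGroup H] [InnerProductSpace ℝ H] [CompleteSpace H]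
  [NormedAddCommGroup K] [InnerProductSpace ℝ K] [CompleteSpace K]
  [NormedAddCommGroup E] [InnerProductSpace ℝ E] [CompleteSpace E]

theorem synth_sq_le {ζ X : Type*} [NormedAddCommGroup X] [InnerProductSpace ℝ X]
    {B₀ : ℝ} (hB₀ : 0 ≤ B₀) {v : ζ → X}
    (hv : ∀ x : X, Summable (fun z => ⟪x, v z⟫ ^ 2) ∧ (∑' z, ⟪x, v z⟫ ^ 2) ≤ B₀ * ‖x‖ ^ 2)
    (cz : ζ → ℝ) (F : Finset ζ) :
    ‖∑ z ∈ F, cz z • v z‖ ^ 2 ≤ B₀ * ∑ z ∈ F, cz z ^ 2 := by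
  set w := ∑ z ∈ F, cz z • v z with hw
  have hinner : ‖w‖ ^ 2 = ∑ z ∈ F, cz z * ⟪v z, w⟫ := by
    rw [← real_inner_self_eq_norm_sq, hw, sum_inner]
    congr 1
    funext z
    rw [real_inner_smul_left]
  have hCS : (∑ z ∈ F, cz z * ⟪v z, w⟫) ^ 2
      ≤ (∑ z ∈ F, cz z ^ 2) * ∑ z ∈ F, ⟪v z, w⟫ ^ 2 :=
    Finset.sum_mul_sq_le_sq_mul_sq F cz (fun z => ⟪v z, w⟫)
  have hB : ∑ z ∈ F, ⟪v z, w⟫ ^ 2 ≤ B₀ * ‖w‖ ^ 2 := by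
    have h1 : ∀ z, ⟪v z, w⟫ ^ 2 = ⟪w, v z⟫ ^ 2 := by
      intro z; rw [real_inner_comm]
    simp only [h1]
    calc ∑ z ∈ F, ⟪w, v z⟫ ^ 2 ≤ ∑' z, ⟪w, v z⟫ ^ 2 :=
          (hv w).1.sum_le_tsum F (fun z _ => sq_nonneg _)
      _ ≤ B₀ * ‖w‖ ^ 2 := (hv w).2
  have hcnn : 0 ≤ ∑ z ∈ F, cz z ^ 2 := Finset.sum_nonneg fun z _ => sq_nonneg _
  have hkey : (‖w‖ ^ 2) ^ 2 ≤ (∑ z ∈ F, cz z ^ 2) * (B₀ * ‖w‖ ^ 2) := by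
    calc (‖w‖ ^ 2) ^ 2 = (∑ z ∈ F, cz z * ⟪v z, w⟫) ^ 2 := by rw [hinner]
      _ ≤ (∑ z ∈ F, cz z ^ 2) * ∑ z ∈ F, ⟪v z, w⟫ ^ 2 := hCS
      _ ≤ (∑ z ∈ F, cz z ^ 2) * (B₀ * ‖w‖ ^ 2) := by
          exact mul_le_mul_of_nonneg_left hB hcnn
  rcases eq_or_lt_of_le (sq_nonneg ‖w‖) with h | h
  · rw [← h]
    positivity
  · nlinarith [h]

theorem synth_summable {ζ X : Type*} [NormedAddCommGroup X] [InnerProductSpace ℝ X]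
    [CompleteSpace X] {B₀ : ℝ} (hB₀ : 0 < B₀) {v : ζ → X}
    (hv : ∀ x : X, Summable (fun z => ⟪x, v z⟫ ^ 2) ∧ (∑' z, ⟪x, v z⟫ ^ 2) ≤ B₀ * ‖x‖ ^ 2)
    {cz : ζ → ℝ} (hc : Summable (fun z => cz z ^ 2)) :
    Summable (fun z => cz z • v z) := by
  rw [summable_iff_vanishing]
  intro e he
  obtain ⟨ε, hε, hball⟩ := Metric.mem_nhds_iff.1 he
  have hδ : 0 < ε ^ 2 / B₀ / 2 := by positivity
  obtain ⟨s, hs⟩ := (summable_iff_vanishing.1 hc) (Metric.ball 0 (ε ^ 2 / B₀ / 2))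
    (Metric.ball_mem_nhds _ hδ)
  refine ⟨s, fun t ht => ?_⟩
  apply hball
  rw [Metric.mem_ball, dist_zero_right]
  have h1 : ‖∑ z ∈ t, cz z • v z‖ ^ 2 ≤ B₀ * ∑ z ∈ t, cz z ^ 2 :=
    synth_sq_le hB₀.le hv cz t
  have h2 := hs t ht
  rw [Metric.mem_ball, dist_zero_right, Real.norm_eq_abs] at h2
  have h3 : ∑ z ∈ t, cz z ^ 2 < ε ^ 2 / B₀ / 2 := lt_of_abs_lt h2
  have h4 : ‖∑ z ∈ t, cz z • v z‖ ^ 2 < ε ^ 2 := by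
    calc ‖∑ z ∈ t, cz z • v z‖ ^ 2 ≤ B₀ * ∑ z ∈ t, cz z ^ 2 := h1
      _ < B₀ * (ε ^ 2 / B₀ / 2) := by exact mul_lt_mul_of_pos_left h3 hB₀
      _ = ε ^ 2 / 2 := by field_simp
      _ < ε ^ 2 := by nlinarith
  nlinarith [norm_nonneg (∑ z ∈ t, cz z • v z), hε]

end Synthesis

section Elementary

variable {H K E : Type*}
  [NormedAddCommGroup H] [InnerProductSpace ℝ H] [CompleteSpace H]
  [NormedAddCommGroup K] [InnerProductSpace ℝ K] [CompleteSpace K]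
  [NormedAddCommGroup E] [InnerProductSpace ℝ E] [CompleteSpace E]

theorem hasSum_elementary (tmul : H →L[ℝ] K →L[ℝ] E)
    (hip : ∀ (p p' : H) (q q' : K), ⟪tmul p q, tmul p' q'⟫ = ⟪p, p'⟫ * ⟪q, q'⟫)
    (p_ e_ : ℕ → H) (q_ h_ : ℕ → K) (x : H) (y : K)
    (hdx : HasSum (fun i : ℕ => ⟪x, e_ i⟫ • p_ i) x)
    (hdy : HasSum (fun j : ℕ => ⟪y, h_ j⟫ • q_ j) y)
    (hsummable : Summable (fun z : ℕ × ℕ =>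
      ⟪tmul x y, tmul (e_ z.1) (h_ z.2)⟫ • tmul (p_ z.1) (q_ z.2))) :
    HasSum (fun z : ℕ × ℕ => ⟪tmul x y, tmul (e_ z.1) (h_ z.2)⟫ • tmul (p_ z.1) (q_ z.2))
      (tmul x y) := by
  obtain ⟨S, hS⟩ := hsummable
  have key : ∀ (F G : Finset ℕ),
      (∑ z ∈ F ×ˢ G, ⟪tmul x y, tmul (e_ z.1) (h_ z.2)⟫ • tmul (p_ z.1) (q_ z.2))
      = tmul (∑ i ∈ F, ⟪x, e_ i⟫ • p_ i) (∑ j ∈ G, ⟪y, h_ j⟫ • q_ j) := by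
    intro F G
    rw [Finset.sum_product]
    rw [map_sum tmul _ F, ContinuousLinearMap.sum_apply]
    congr 1
    funext i
    rw [map_smul tmul, ContinuousLinearMap.smul_apply, map_sum (tmul (p_ i)) _ G,
      Finset.smul_sum]
    congr 1
    funext j
    rw [map_smul, smul_smul, hip, mul_comm (⟪x, e_ i⟫) (⟪y, h_ j⟫)]
  -- limit along rectangles
  have hrect : Filter.Tendsto (fun P : Finset ℕ × Finset ℕ => P.1 ×ˢ P.2)
      Filter.atTop Filter.atTop := Filter.tendsto_finset_prod_atTop
  have h2 : Filter.Tendsto (fun P : Finset ℕ × Finset ℕ =>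
      ∑ z ∈ P.1 ×ˢ P.2, ⟪tmul x y, tmul (e_ z.1) (h_ z.2)⟫ • tmul (p_ z.1) (q_ z.2))
      Filter.atTop (nhds S) := hS.comp hrect
  have hprod : Filter.Tendsto (fun P : Finset ℕ × Finset ℕ =>
      ((∑ i ∈ P.1, ⟪x, e_ i⟫ • p_ i), (∑ j ∈ P.2, ⟪y, h_ j⟫ • q_ j)))
      Filter.atTop (nhds (x, y)) := by
    rw [← Filter.prod_atTop_atTop_eq, nhds_prod_eq]
    exact Filter.Tendsto.prodMap (hdx : Filter.Tendsto (fun s : Finset ℕ => ∑ i ∈ s, ⟪x, e_ i⟫ • p_ i) Filter.atTop (nhds x))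
      (hdy : Filter.Tendsto (fun s : Finset ℕ => ∑ j ∈ s, ⟪y, h_ j⟫ • q_ j) Filter.atTop (nhds y))
  have hcont : Continuous (fun uv : H × K => tmul uv.1 uv.2) := tmul.continuous₂
  have h3 : Filter.Tendsto (fun P : Finset ℕ × Finset ℕ =>
      tmul (∑ i ∈ P.1, ⟪x, e_ i⟫ • p_ i) (∑ j ∈ P.2, ⟪y, h_ j⟫ • q_ j))
      Filter.atTop (nhds (tmul x y)) :=
    ((hcont.tendsto (x, y)).comp hprod)
  have heqfun : (fun P : Finset ℕ × Finset ℕ =>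
      ∑ z ∈ P.1 ×ˢ P.2, ⟪tmul x y, tmul (e_ z.1) (h_ z.2)⟫ • tmul (p_ z.1) (q_ z.2))
      = fun P => tmul (∑ i ∈ P.1, ⟪x, e_ i⟫ • p_ i) (∑ j ∈ P.2, ⟪y, h_ j⟫ • q_ j) := by
    funext P; exact key P.1 P.2
  rw [heqfun] at h2
  have : S = tmul x y := tendsto_nhds_unique h2 h3
  rwa [this] at hS

end Elementary

section TsumNorm

theorem synth_tsum_norm_le {ζ X : Type*} [NormedAddCommGroup X] [InnerProductSpace ℝ X]
    [CompleteSpace X] {B₀ : ℝ} (hB₀ : 0 ≤ B₀) {v : ζ → X}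
    (hv : ∀ x : X, Summable (fun z => ⟪x, v z⟫ ^ 2) ∧ (∑' z, ⟪x, v z⟫ ^ 2) ≤ B₀ * ‖x‖ ^ 2)
    {cz : ζ → ℝ} (hc : Summable (fun z => cz z ^ 2))
    (hsum : Summable (fun z => cz z • v z)) :
    ‖∑' z, cz z • v z‖ ≤ Real.sqrt (B₀ * ∑' z, cz z ^ 2) := by
  have hF : ∀ F : Finset ζ, ‖∑ z ∈ F, cz z • v z‖ ≤ Real.sqrt (B₀ * ∑' z, cz z ^ 2) := by
    intro F
    have h1 : ‖∑ z ∈ F, cz z • v z‖ ^ 2 ≤ B₀ * ∑ z ∈ F, cz z ^ 2 := synth_sq_le hB₀ hv cz F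
    have h2 : B₀ * ∑ z ∈ F, cz z ^ 2 ≤ B₀ * ∑' z, cz z ^ 2 :=
      mul_le_mul_of_nonneg_left (hc.sum_le_tsum F (fun z _ => sq_nonneg _)) hB₀
    have h3 := Real.sqrt_le_sqrt (le_trans h1 h2)
    rwa [Real.sqrt_sq (norm_nonneg _)] at h3
  have ht : Filter.Tendsto (fun F : Finset ζ => ‖∑ z ∈ F, cz z • v z‖)
      Filter.atTop (nhds ‖∑' z, cz z • v z‖) :=
    (continuous_norm.tendsto _).comp hsum.hasSum
  exact le_of_tendsto ht (Filter.Eventually.of_forall hF)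

end TsumNorm

theorem tensor_dual_frames {H K E : Type*}
    [NormedAddCommGroup H] [InnerProductSpace ℝ H] [CompleteSpace H]
    [NormedAddCommGroup K] [InnerProductSpace ℝ K] [CompleteSpace K]
    [NormedAddCommGroup E] [InnerProductSpace ℝ E] [CompleteSpace E]
    (tmul : H →L[ℝ] K →L[ℝ] E) (htp : IsHilbertTensorProduct tmul)
    (p_ e_ : ℕ → H) (q_ h_ : ℕ → K) (A B A' B' C D C' D' : ℝ)
    (hpf : IsFrameWith A B p_) (hef : IsFrameWith A' B' e_)
    (hqf : IsFrameWith C D q_) (hhf : IsFrameWith C' D' h_)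
    (hdualH : ∀ x : H, HasSum (fun i : ℕ => ⟪x, e_ i⟫ • p_ i) x)
    (hdualK : ∀ y : K, HasSum (fun j : ℕ => ⟪y, h_ j⟫ • q_ j) y) :
    (∃ A₀ B₀ : ℝ, IsFrameWith A₀ B₀ (fun ij : ℕ × ℕ => tmul (p_ ij.1) (q_ ij.2))) ∧
    (∃ A₁ B₁ : ℝ, IsFrameWith A₁ B₁ (fun ij : ℕ × ℕ => tmul (e_ ij.1) (h_ ij.2))) ∧
    ∀ u : E, HasSum
      (fun ij : ℕ × ℕ => ⟪u, tmul (e_ ij.1) (h_ ij.2)⟫ • tmul (p_ ij.1) (q_ ij.2)) u := by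
  obtain ⟨hip, hdense⟩ := htp
  obtain ⟨hA, hAB, hp⟩ := hpf
  obtain ⟨hA', hAB', he⟩ := hef
  obtain ⟨hC, hCD, hq⟩ := hqf
  obtain ⟨hC', hCD', hh⟩ := hhf
  have hfpP : FP A B p_ := fp_of_frame hA hp
  have hfpE : FP A' B' e_ := fp_of_frame hA' he
  have hfpQ : FP C D q_ := fp_of_frame hC hq
  have hfpH : FP C' D' h_ := fp_of_frame hC' hh
  have hPQ : FP (A * C) (B * D) (fun z : ℕ × ℕ => tmul (p_ z.1) (q_ z.2)) :=
    fp_tensor tmul hip hdense hC.le (hC.le.trans hCD) hfpP hfpQ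
  have hEH : FP (A' * C') (B' * D') (fun z : ℕ × ℕ => tmul (e_ z.1) (h_ z.2)) :=
    fp_tensor tmul hip hdense hC'.le (hC'.le.trans hCD') hfpE hfpH
  have hle : A * C ≤ B * D := mul_le_mul hAB hCD hC.le (hA.le.trans hAB)
  have hle' : A' * C' ≤ B' * D' := mul_le_mul hAB' hCD' hC'.le (hA'.le.trans hAB')
  have hBD : 0 < B * D := lt_of_lt_of_le (mul_pos hA hC) hle
  have hBD' : 0 < B' * D' := lt_of_lt_of_le (mul_pos hA' hC') hle'
  refine ⟨⟨A * C, B * D, mul_pos hA hC, hle, fun u => ⟨(hPQ u).2.1, (hPQ u).2.2⟩⟩,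
    ⟨A' * C', B' * D', mul_pos hA' hC', hle', fun u => ⟨(hEH u).2.1, (hEH u).2.2⟩⟩, ?_⟩
  -- reconstruction
  have hPbessel : ∀ x : E, Summable (fun z : ℕ × ℕ => ⟪x, tmul (p_ z.1) (q_ z.2)⟫ ^ 2) ∧
      (∑' z : ℕ × ℕ, ⟪x, tmul (p_ z.1) (q_ z.2)⟫ ^ 2) ≤ (B * D) * ‖x‖ ^ 2 :=
    fun x => ⟨(hPQ x).1, (hPQ x).2.2⟩
  have hsumm : ∀ u : E, Summable (fun z : ℕ × ℕ =>
      ⟪u, tmul (e_ z.1) (h_ z.2)⟫ • tmul (p_ z.1) (q_ z.2)) :=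
    fun u => synth_summable hBD hPbessel (hEH u).1
  set S : E → E := fun u => ∑' z : ℕ × ℕ, ⟪u, tmul (e_ z.1) (h_ z.2)⟫ • tmul (p_ z.1) (q_ z.2)
    with hSdef
  have hSsub : ∀ u v : E, S u - S v = S (u - v) := by
    intro u v
    rw [hSdef]
    simp only
    rw [← (hsumm u).tsum_sub (hsumm v)]
    congr 1
    funext z
    rw [← sub_smul, ← inner_sub_left]
  have hL : ∀ w : E, ‖S w‖ ≤ Real.sqrt ((B * D) * (B' * D')) * ‖w‖ := by
    intro w
    have h1 : ‖S w‖ ≤ Real.sqrt ((B * D) * ∑' z : ℕ × ℕ, ⟪w, tmul (e_ z.1) (h_ z.2)⟫ ^ 2) :=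
      synth_tsum_norm_le hBD.le hPbessel (hEH w).1 (hsumm w)
    have h2 : (B * D) * (∑' z : ℕ × ℕ, ⟪w, tmul (e_ z.1) (h_ z.2)⟫ ^ 2)
        ≤ (B * D) * ((B' * D') * ‖w‖ ^ 2) :=
      mul_le_mul_of_nonneg_left (hEH w).2.2 hBD.le
    calc ‖S w‖ ≤ Real.sqrt ((B * D) * ∑' z : ℕ × ℕ, ⟪w, tmul (e_ z.1) (h_ z.2)⟫ ^ 2) := h1
      _ ≤ Real.sqrt ((B * D) * ((B' * D') * ‖w‖ ^ 2)) := Real.sqrt_le_sqrt h2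
      _ = Real.sqrt ((B * D) * (B' * D')) * ‖w‖ := by
          rw [show (B * D) * ((B' * D') * ‖w‖ ^ 2) = ((B * D) * (B' * D')) * ‖w‖ ^ 2 by ring,
            Real.sqrt_mul (by positivity) (‖w‖ ^ 2), Real.sqrt_sq (norm_nonneg w)]
  have hcontS : Continuous S := by
    apply LipschitzWith.continuous (K := Real.toNNReal (Real.sqrt ((B * D) * (B' * D'))))
    apply LipschitzWith.of_dist_le_mul
    intro u v
    rw [dist_eq_norm, dist_eq_norm, hSsub u v]
    calc ‖S (u - v)‖ ≤ Real.sqrt ((B * D) * (B' * D')) * ‖u - v‖ := hL (u - v)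
      _ = ↑(Real.toNNReal (Real.sqrt ((B * D) * (B' * D')))) * ‖u - v‖ := by
          rw [Real.coe_toNNReal _ (Real.sqrt_nonneg _)]
  have hspan : ∀ u ∈ (Submodule.span ℝ (Set.range fun z : H × K => tmul z.1 z.2) : Submodule ℝ E),
      HasSum (fun z : ℕ × ℕ => ⟪u, tmul (e_ z.1) (h_ z.2)⟫ • tmul (p_ z.1) (q_ z.2)) u := by
    intro u hu
    induction hu using Submodule.span_induction with
    | mem w hw =>
      obtain ⟨zx, rfl⟩ := hw
      exact hasSum_elementary tmul hip p_ e_ q_ h_ zx.1 zx.2 (hdualH zx.1) (hdualK zx.2)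
        (hsumm _)
    | zero =>
      have h0 : (fun z : ℕ × ℕ => ⟪(0 : E), tmul (e_ z.1) (h_ z.2)⟫ • tmul (p_ z.1) (q_ z.2))
          = fun _ => (0 : E) := by
        funext z; simp
      rw [h0]; exact hasSum_zero
    | add a b ha hb iha ihb =>
      have heq : (fun z : ℕ × ℕ => ⟪a + b, tmul (e_ z.1) (h_ z.2)⟫ • tmul (p_ z.1) (q_ z.2))
          = fun z : ℕ × ℕ => (⟪a, tmul (e_ z.1) (h_ z.2)⟫ • tmul (p_ z.1) (q_ z.2))
            + (⟪b, tmul (e_ z.1) (h_ z.2)⟫ • tmul (p_ z.1) (q_ z.2)) := by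
        funext z; rw [inner_add_left, add_smul]
      rw [heq]; exact iha.add ihb
    | smul r a ha iha =>
      have heq : (fun z : ℕ × ℕ => ⟪r • a, tmul (e_ z.1) (h_ z.2)⟫ • tmul (p_ z.1) (q_ z.2))
          = fun z : ℕ × ℕ => r • (⟪a, tmul (e_ z.1) (h_ z.2)⟫ • tmul (p_ z.1) (q_ z.2)) := by
        funext z; rw [real_inner_smul_left, smul_smul]
      rw [heq]; exact iha.const_smul r
  have hEq : S = id := by
    apply Continuous.ext_on hdense hcontS continuous_id
    intro u hu
    exact (hspan u hu).tsum_eq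
  intro u
  have hSu : S u = u := by rw [hEq]; rfl
  exact (Summable.hasSum_iff (hsumm u)).2 hSu
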